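/- arXiv:1401.1520 — 2 statements merged into one kernel-verified Lean document; each statement's English description precedes it below -/
import Mathlib

section
/- Define recursively on [a,b]: X̃⁽ⁿ⁾ ≡ 0 for n < 0, X̃⁽⁰⁾ ≡ 1, X̃⁽ⁿ⁾(x) = ∫_{x₀}^x u₀²(y) Σ_{k=1}^N X̃⁽ⁿ⁻²ᵏ⁺¹⁾(y) r_k(y) dy for n odd, and X̃⁽ⁿ⁾(x) = ∫_{x₀}^x X̃⁽ⁿ⁻¹⁾(y) / (u₀²(y) p(y)) dy for n even. If the absolute values of u₀² r_k (k=1,…,N) and 1/(u₀² p) are bounded by m on [a,b], then for all n ≥ 0 and x ∈ [a,b], |X̃^{(2n)}(x)| ≤ Σ_{k=0}^{n-⌊n/N⌋} C(n,k) (m|x-x₀|)^{2(n-k)} / (2(n-k))!. -/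
open MeasureTheory intervalIntegral

def stmt4cf (N n j : ℕ) : ℕ := if n / N ≤ j then n.choose j else 0

def stmt4cfz (N : ℕ) (n : ℤ) (j : ℕ) : ℕ := if 0 ≤ n then stmt4cf N n.toNat j else 0

lemma stmt4cf_eq_zero_of_lt {N n j : ℕ} (h : n < j) : stmt4cf N n j = 0 := by
  unfold stmt4cf; split <;> simp [Nat.choose_eq_zero_of_lt h]

lemma stmt4comb (N n i : ℕ) (hN : 1 ≤ N) :
    ∑ k ∈ Finset.Icc 1 N, stmt4cfz N ((n : ℤ) + 1 - k) i ≤ stmt4cf N (n + 1) (i + 1) := by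
  by_cases hz : ∀ k ∈ Finset.Icc 1 N, stmt4cfz N ((n : ℤ) + 1 - k) i = 0
  · rw [Finset.sum_eq_zero hz]; exact Nat.zero_le _
  · push_neg at hz
    obtain ⟨k₀, hk₀mem, hk₀⟩ := hz
    have hk₀N : k₀ ≤ N := (Finset.mem_Icc.mp hk₀mem).2
    have h1 : (0 : ℤ) ≤ (n : ℤ) + 1 - k₀ := by
      by_contra h
      simp only [stmt4cfz, if_neg h] at hk₀
      exact hk₀ rfl
    have hk₀n : k₀ ≤ n + 1 := by omega
    have htn : ((n : ℤ) + 1 - k₀).toNat = n + 1 - k₀ := by omega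
    have hcond : (n + 1 - k₀) / N ≤ i := by
      by_contra h
      simp only [stmt4cfz, if_pos h1, htn, stmt4cf, if_neg h] at hk₀
      exact hk₀ rfl
    have hr : (n + 1) / N ≤ i + 1 := by
      have h2 : n + 1 ≤ (n + 1 - k₀) + N := by omega
      calc (n + 1) / N ≤ ((n + 1 - k₀) + N) / N := Nat.div_le_div_right h2
        _ = (n + 1 - k₀) / N + 1 := Nat.add_div_right _ (by omega)
        _ ≤ i + 1 := by omega
    have hrhs : stmt4cf N (n + 1) (i + 1) = (n + 1).choose (i + 1) := if_pos hr
    rw [hrhs]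
    have hle : ∀ k ∈ Finset.Icc 1 N, stmt4cfz N ((n : ℤ) + 1 - k) i
        ≤ if 1 ≤ k ∧ k ≤ n + 1 then (n + 1 - k).choose i else 0 := by
      intro k hk
      by_cases hkn : k ≤ n + 1
      · have h0 : (0 : ℤ) ≤ (n : ℤ) + 1 - k := by omega
        have ht : ((n : ℤ) + 1 - k).toNat = n + 1 - k := by omega
        rw [stmt4cfz, if_pos h0, ht, if_pos ⟨(Finset.mem_Icc.mp hk).1, hkn⟩]
        unfold stmt4cf
        split
        · exact le_rfl
        · exact Nat.zero_le _
      · have h0 : ¬ (0 : ℤ) ≤ (n : ℤ) + 1 - k := by omega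
        rw [stmt4cfz, if_neg h0]
        exact Nat.zero_le _
    calc ∑ k ∈ Finset.Icc 1 N, stmt4cfz N ((n : ℤ) + 1 - k) i
        ≤ ∑ k ∈ Finset.Icc 1 N, (if 1 ≤ k ∧ k ≤ n + 1 then (n + 1 - k).choose i else 0) :=
          Finset.sum_le_sum hle
      _ = ∑ k ∈ (Finset.Icc 1 N).filter (fun k => 1 ≤ k ∧ k ≤ n + 1), (n + 1 - k).choose i :=
          (Finset.sum_filter _ _).symm
      _ ≤ ∑ k ∈ Finset.Icc 1 (n + 1), (n + 1 - k).choose i := by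
          apply Finset.sum_le_sum_of_subset
          intro k hk
          simp only [Finset.mem_filter, Finset.mem_Icc] at *
          omega
      _ = ∑ j ∈ Finset.range (n + 1), (n + 1 - (1 + j)).choose i := by
          rw [← Finset.Ico_add_one_right_eq_Icc, Finset.sum_Ico_eq_sum_range]
          norm_num
      _ = ∑ j ∈ Finset.range (n + 1), (n - j).choose i := by
          apply Finset.sum_congr rfl; intro j _; congr 1; omega
      _ = ∑ j ∈ Finset.range (n + 1), j.choose i := by
          have := Finset.sum_range_reflect (fun j => j.choose i) (n + 1)
          simpa using this
      _ = ∑ j ∈ Finset.Icc i n, j.choose i := by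
          symm
          apply Finset.sum_subset
          · intro j hj
            simp only [Finset.mem_Icc] at hj
            simp only [Finset.mem_range]
            omega
          · intro j hj hj'
            simp only [Finset.mem_range] at hj
            simp only [Finset.mem_Icc] at hj'
            exact Nat.choose_eq_zero_of_lt (by omega)
      _ = (n + 1).choose (i + 1) := Nat.sum_Icc_choose n i

lemma stmt4core (i : ℕ) (x₀ x : ℝ) :
    |∫ y in x₀..x, |y - x₀| ^ i| = |x - x₀| ^ (i + 1) / (i + 1) := by
  rw [abs_intervalIntegral_eq, integral_pow_abs_sub_uIoc]
  exact abs_of_nonneg (by positivity)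

lemma stmt4step (x₀ x m : ℝ) (hm : 0 ≤ m) (F : ℝ → ℂ) (M : ℕ) (c : ℕ → ℝ)
    (hc : ∀ i, 0 ≤ c i) (e : ℕ → ℕ)
    (hF : ∀ y ∈ Set.uIoc x₀ x, ‖F y‖ ≤ ∑ i ∈ Finset.range M,
        c i * (m * (m * |y - x₀|) ^ e i / (Nat.factorial (e i) : ℝ))) :
    ‖∫ y in x₀..x, F y‖ ≤ ∑ i ∈ Finset.range M,
        c i * ((m * |x - x₀|) ^ (e i + 1) / (Nat.factorial (e i + 1) : ℝ)) := by
  have hcont : ∀ i : ℕ, Continuous fun y : ℝ =>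
      c i * (m * (m * |y - x₀|) ^ e i / (Nat.factorial (e i) : ℝ)) := by
    intro i; fun_prop
  have hint : ∀ i ∈ Finset.range M, IntervalIntegrable
      (fun y => c i * (m * (m * |y - x₀|) ^ e i / (Nat.factorial (e i) : ℝ))) volume x₀ x :=
    fun i _ => (hcont i).intervalIntegrable _ _
  have hgcont : Continuous fun y : ℝ => ∑ i ∈ Finset.range M,
      c i * (m * (m * |y - x₀|) ^ e i / (Nat.factorial (e i) : ℝ)) :=
    continuous_finset_sum _ fun i _ => hcont i
  have h1 : ‖∫ y in x₀..x, F y‖ ≤ |∫ y in x₀..x, ∑ i ∈ Finset.range M,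
      c i * (m * (m * |y - x₀|) ^ e i / (Nat.factorial (e i) : ℝ))| :=
    by
      rw [norm_integral_eq_norm_integral_uIoc, abs_intervalIntegral_eq]
      exact (MeasureTheory.norm_integral_le_of_norm_le (hgcont.intervalIntegrable x₀ x).def'
        ((ae_restrict_iff' measurableSet_uIoc).mpr (Filter.Eventually.of_forall hF))).trans
        (le_abs_self _)
  rw [intervalIntegral.integral_finset_sum hint] at h1
  refine h1.trans ((Finset.abs_sum_le_sum_abs _ _).trans (Finset.sum_le_sum ?_))
  intro i _
  have hrw : (fun y : ℝ => c i * (m * (m * |y - x₀|) ^ e i / (Nat.factorial (e i) : ℝ)))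
      = fun y => (c i * m ^ (e i + 1) / (Nat.factorial (e i) : ℝ)) * |y - x₀| ^ e i := by
    funext y; rw [mul_pow]; ring
  rw [hrw, intervalIntegral.integral_const_mul, abs_mul,
    abs_of_nonneg (div_nonneg (mul_nonneg (hc i) (pow_nonneg hm _)) (Nat.cast_nonneg _)),
    stmt4core]
  apply le_of_eq
  have hfac : ((Nat.factorial (e i)) : ℝ) ≠ 0 := Nat.cast_ne_zero.mpr (Nat.factorial_ne_zero _)
  rw [mul_pow, Nat.factorial_succ]
  push_cast
  field_simp

theorem stmt4 (a b x₀ : ℝ) (hab : a ≤ b) (hx₀ : x₀ ∈ Set.Icc a b)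
    (N : ℕ) (hN : 1 ≤ N) (p u₀ : ℝ → ℂ) (r : ℕ → ℝ → ℂ) (m : ℝ)
    (Xt : ℤ → ℝ → ℂ)
    (hneg : ∀ n : ℤ, n < 0 → ∀ x, Xt n x = 0)
    (hzero : ∀ x, Xt 0 x = 1)
    (hodd : ∀ n : ℤ, 0 < n → Odd n → ∀ x,
      Xt n x = ∫ y in x₀..x, u₀ y ^ 2 * ∑ k ∈ Finset.Icc 1 N, Xt (n - 2 * (k : ℤ) + 1) y * r k y)
    (heven : ∀ n : ℤ, 0 < n → Even n → ∀ x,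
      Xt n x = ∫ y in x₀..x, Xt (n - 1) y / (u₀ y ^ 2 * p y))
    (hbound1 : ∀ k ∈ Finset.Icc 1 N, ∀ x ∈ Set.Icc a b, ‖u₀ x ^ 2 * r k x‖ ≤ m)
    (hbound2 : ∀ x ∈ Set.Icc a b, ‖1 / (u₀ x ^ 2 * p x)‖ ≤ m) :
    ∀ n : ℕ, ∀ x ∈ Set.Icc a b,
      ‖Xt (2 * n) x‖ ≤ ∑ k ∈ Finset.range (n - n / N + 1),
        (n.choose k : ℝ) * (m * |x - x₀|) ^ (2 * (n - k)) / (Nat.factorial (2 * (n - k)) : ℝ) := by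
  have hm : 0 ≤ m := le_trans (norm_nonneg _) (hbound2 x₀ hx₀)
  have hsub : ∀ u ∈ Set.Icc a b, Set.uIoc x₀ u ⊆ Set.Icc a b := by
    intro u hu z hz
    rcases Set.mem_uIoc.mp hz with h | h
    · exact ⟨le_trans hx₀.1 h.1.le, le_trans h.2 hu.2⟩
    · exact ⟨le_trans hu.1 h.1.le, le_trans h.2 hx₀.2⟩
  have key : ∀ n : ℕ, ∀ x ∈ Set.Icc a b,
      ‖Xt (2 * n) x‖ ≤ ∑ j ∈ Finset.range (n + 1),
        (stmt4cf N n j : ℝ) * ((m * |x - x₀|) ^ (2 * j) / (Nat.factorial (2 * j) : ℝ)) := by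
    intro n
    induction n using Nat.strong_induction_on with
    | _ n ih =>
      cases n with
      | zero =>
        intro x hx
        rw [show ((2 * ((0:ℕ):ℤ)) = 0) by norm_num, hzero x]
        simp [stmt4cf]
      | succ n' =>
        intro x hx
        --整数版帰納法
        have ihz : ∀ j : ℤ, j ≤ (n' : ℤ) → ∀ y ∈ Set.Icc a b,
            ‖Xt (2 * j) y‖ ≤ ∑ i ∈ Finset.range (n' + 1),
              (stmt4cfz N j i : ℝ) * ((m * |y - x₀|) ^ (2 * i) / (Nat.factorial (2 * i) : ℝ)) := by
          intro j hj y hy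
          rcases lt_or_ge j 0 with hj0 | hj0
          · rw [hneg (2 * j) (by omega) y, norm_zero]
            apply Finset.sum_nonneg
            intro i _
            positivity
          · have hjn : j.toNat < n' + 1 := by omega
            have h2j : (2 * j : ℤ) = 2 * (j.toNat : ℤ) := by omega
            rw [h2j]
            refine (ih j.toNat hjn y hy).trans (le_of_eq ?_)
            have hcfz : ∀ i, (stmt4cfz N j i : ℝ) = (stmt4cf N j.toNat i : ℝ) := by
              intro i; rw [stmt4cfz, if_pos hj0]
            simp only [hcfz]
            apply Finset.sum_subset (Finset.range_subset_range.mpr (by omega))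
            intro i _ hi
            rw [stmt4cf_eq_zero_of_lt (by simp only [Finset.mem_range] at hi; omega)]
            simp
        -- odd step
        have hoddbd : ∀ y ∈ Set.Icc a b, ‖Xt (2 * (n' : ℤ) + 1) y‖ ≤
            ∑ i ∈ Finset.range (n' + 1),
              ((∑ k ∈ Finset.Icc 1 N, stmt4cfz N ((n' : ℤ) + 1 - k) i : ℕ) : ℝ) *
                ((m * |y - x₀|) ^ (2 * i + 1) / (Nat.factorial (2 * i + 1) : ℝ)) := by
          intro y hy
          rw [hodd (2 * (n' : ℤ) + 1) (by omega) ⟨n', by ring⟩ y]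
          have hstep := stmt4step x₀ y m hm
            (fun z => u₀ z ^ 2 * ∑ k ∈ Finset.Icc 1 N, Xt (2 * (n' : ℤ) + 1 - 2 * k + 1) z * r k z)
            (n' + 1)
            (fun i => ((∑ k ∈ Finset.Icc 1 N, stmt4cfz N ((n' : ℤ) + 1 - k) i : ℕ) : ℝ))
            (fun i => Nat.cast_nonneg _) (fun i => 2 * i) ?_
          · exact hstep
          · intro z hz
            beta_reduce
            have hzab : z ∈ Set.Icc a b := hsub y hy hz
            have hrw : u₀ z ^ 2 * ∑ k ∈ Finset.Icc 1 N, Xt (2 * (n' : ℤ) + 1 - 2 * k + 1) z * r k z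
                = ∑ k ∈ Finset.Icc 1 N, (u₀ z ^ 2 * r k z) * Xt (2 * ((n' : ℤ) + 1 - k)) z := by
              rw [Finset.mul_sum]
              apply Finset.sum_congr rfl
              intro k _
              rw [show (2 * (n' : ℤ) + 1 - 2 * k + 1) = 2 * ((n' : ℤ) + 1 - k) by ring]
              ring
            rw [hrw]
            calc ‖∑ k ∈ Finset.Icc 1 N, (u₀ z ^ 2 * r k z) * Xt (2 * ((n' : ℤ) + 1 - k)) z‖
                ≤ ∑ k ∈ Finset.Icc 1 N, ‖(u₀ z ^ 2 * r k z) * Xt (2 * ((n' : ℤ) + 1 - k)) z‖ :=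
                  norm_sum_le _ _
              _ ≤ ∑ k ∈ Finset.Icc 1 N, m * (∑ i ∈ Finset.range (n' + 1),
                    (stmt4cfz N ((n' : ℤ) + 1 - k) i : ℝ) *
                      ((m * |z - x₀|) ^ (2 * i) / (Nat.factorial (2 * i) : ℝ))) := by
                  apply Finset.sum_le_sum
                  intro k hk
                  rw [norm_mul]
                  have hk1 := (Finset.mem_Icc.mp hk).1
                  exact mul_le_mul (hbound1 k hk z hzab)
                    (ihz ((n' : ℤ) + 1 - k) (by omega) z hzab) (norm_nonneg _) hm
              _ = ∑ i ∈ Finset.range (n' + 1),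
                    ((∑ k ∈ Finset.Icc 1 N, stmt4cfz N ((n' : ℤ) + 1 - k) i : ℕ) : ℝ) *
                      (m * (m * |z - x₀|) ^ (2 * i) / (Nat.factorial (2 * i) : ℝ)) := by
                  simp only [Finset.mul_sum]
                  rw [Finset.sum_comm]
                  apply Finset.sum_congr rfl
                  intro i _
                  rw [Nat.cast_sum, Finset.sum_mul]
                  apply Finset.sum_congr rfl
                  intro k _
                  ring
        -- even step
        rw [show ((2 * (((n' + 1 : ℕ)) : ℤ)) = 2 * (n' : ℤ) + 2) by push_cast; ring]
        rw [heven (2 * (n' : ℤ) + 2) (by omega) ⟨(n' : ℤ) + 1, by ring⟩ x]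
        have hstep := stmt4step x₀ x m hm
          (fun z => Xt (2 * (n' : ℤ) + 2 - 1) z / (u₀ z ^ 2 * p z)) (n' + 1)
          (fun i => ((∑ k ∈ Finset.Icc 1 N, stmt4cfz N ((n' : ℤ) + 1 - k) i : ℕ) : ℝ))
          (fun i => Nat.cast_nonneg _) (fun i => 2 * i + 1) ?_
        · refine hstep.trans ?_
          conv_rhs => rw [Finset.sum_range_succ']
          have hterm : ∀ i ∈ Finset.range (n' + 1),
              ((∑ k ∈ Finset.Icc 1 N, stmt4cfz N ((n' : ℤ) + 1 - k) i : ℕ) : ℝ) *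
                ((m * |x - x₀|) ^ (2 * i + 1 + 1) / (Nat.factorial (2 * i + 1 + 1) : ℝ))
              ≤ (stmt4cf N (n' + 1) (i + 1) : ℝ) *
                ((m * |x - x₀|) ^ (2 * (i + 1)) / (Nat.factorial (2 * (i + 1)) : ℝ)) := by
            intro i _
            rw [show (2 * i + 1 + 1) = 2 * (i + 1) by omega]
            apply mul_le_mul_of_nonneg_right
            · exact_mod_cast stmt4comb N n' i hN
            · positivity
          refine (Finset.sum_le_sum hterm).trans ?_
          exact le_add_of_nonneg_right (by positivity)
        · intro z hz
          beta_reduce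
          have hzab : z ∈ Set.Icc a b := hsub x hx hz
          rw [show ((2 * (n' : ℤ) + 2 - 1) = 2 * (n' : ℤ) + 1) by ring]
          rw [div_eq_mul_one_div, norm_mul]
          calc ‖Xt (2 * (n' : ℤ) + 1) z‖ * ‖1 / (u₀ z ^ 2 * p z)‖
              ≤ (∑ i ∈ Finset.range (n' + 1),
                  ((∑ k ∈ Finset.Icc 1 N, stmt4cfz N ((n' : ℤ) + 1 - k) i : ℕ) : ℝ) *
                    ((m * |z - x₀|) ^ (2 * i + 1) / (Nat.factorial (2 * i + 1) : ℝ))) * m := by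
                apply mul_le_mul (hoddbd z hzab) (hbound2 z hzab) (norm_nonneg _)
                apply Finset.sum_nonneg
                intro i _
                positivity
            _ = ∑ i ∈ Finset.range (n' + 1),
                  ((∑ k ∈ Finset.Icc 1 N, stmt4cfz N ((n' : ℤ) + 1 - k) i : ℕ) : ℝ) *
                    (m * (m * |z - x₀|) ^ (2 * i + 1) / (Nat.factorial (2 * i + 1) : ℝ)) := by
                rw [Finset.sum_mul]
                apply Finset.sum_congr rfl
                intro i _
                ring
  intro n x hx
  obtain ⟨q, hqd⟩ : ∃ q, n / N = q := ⟨_, rfl⟩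
  have hq : q ≤ n := hqd ▸ Nat.div_le_self n N
  rw [hqd]
  refine le_trans (key n x hx) (le_of_eq ?_)
  rw [← Finset.sum_range_reflect
    (fun j => (stmt4cf N n j : ℝ) * ((m * |x - x₀|) ^ (2 * j) / (Nat.factorial (2 * j) : ℝ))) (n + 1)]
  symm
  have hzeros : ∀ j ∈ Finset.range (n + 1), j ∉ Finset.range (n - q + 1) →
      (stmt4cf N n (n + 1 - 1 - j) : ℝ) *
        ((m * |x - x₀|) ^ (2 * (n + 1 - 1 - j)) / (Nat.factorial (2 * (n + 1 - 1 - j)) : ℝ)) = 0 := by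
    intro k hk hk'
    simp only [Finset.mem_range] at hk hk'
    rw [show (n + 1 - 1 - k) = n - k by omega]
    rw [show stmt4cf N n (n - k) = 0 from if_neg (by rw [hqd]; omega)]
    simp
  rw [← Finset.sum_subset (Finset.range_subset_range.mpr (show n - q + 1 ≤ n + 1 by omega)) hzeros]
  apply Finset.sum_congr rfl
  intro k hk
  simp only [Finset.mem_range] at hk
  rw [show (n + 1 - 1 - k) = n - k by omega]
  rw [show stmt4cf N n (n - k) = (n.choose (n - k)) from if_pos (by rw [hqd]; omega)]
  rw [Nat.choose_symm (by omega)]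
  ring
end

section
/- Under the assumptions of the SPPS recursion (functions u₀² r_k and 1/(u₀²p) continuous, hence bounded by m, on [a,b]), for every fixed λ ∈ ℂ the series Σ_{n=0}^∞ λⁿ X̃^{(2n)}(x) converges uniformly and absolutely on [a,b], with Σ_{n=0}^∞ |λ|ⁿ |X̃^{(2n)}(x)| ≤ (Σ_{k=0}^{N-1} M^k) cosh(M^{N/2}) where M = |λ|((m(b-a))² + 1). -/
open MeasureTheory Filter Nat



/-- Number of compositions of `n` into `i` parts each in `[1, N]`. -/
def wcoef (N : ℕ) : ℕ → ℕ → ℕ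
  | 0, 0 => 1
  | 0, _ + 1 => 0
  | _ + 1, 0 => 0
  | n + 1, i + 1 =>
      ∑ k ∈ (Finset.Icc 1 N).attach,
        if k.1 ≤ n + 1 then wcoef N (n + 1 - k.1) i else 0
  termination_by n _ => n
  decreasing_by
    have := (Finset.mem_Icc.mp k.2).1
    omega

lemma wcoef_succ (N n i : ℕ) :
    wcoef N (n + 1) (i + 1)
      = ∑ k ∈ Finset.Icc 1 N, if k ≤ n + 1 then wcoef N (n + 1 - k) i else 0 := by
  rw [show wcoef N (n+1) (i+1) = ∑ k ∈ (Finset.Icc 1 N).attach,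
        if k.1 ≤ n + 1 then wcoef N (n + 1 - k.1) i else 0 from by rw [wcoef]]
  exact Finset.sum_attach _ (fun k => if k ≤ n + 1 then wcoef N (n + 1 - k) i else 0)

lemma wcoef_zero_zero (N : ℕ) : wcoef N 0 0 = 1 := by rw [wcoef]

lemma wcoef_zero_succ (N i : ℕ) : wcoef N 0 (i + 1) = 0 := by rw [wcoef]

lemma wcoef_succ_zero (N n : ℕ) : wcoef N (n + 1) 0 = 0 := by rw [wcoef]

lemma wcoef_eq_zero_of_lt (N : ℕ) : ∀ n i, n < i → wcoef N n i = 0 := by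
  intro n
  induction n using Nat.strong_induction_on with
  | _ n IH =>
    intro i hi
    match n, i with
    | 0, i + 1 => exact wcoef_zero_succ N i
    | n + 1, i + 1 =>
      rw [wcoef_succ]
      refine Finset.sum_eq_zero fun k hk => ?_
      have hk1 := (Finset.mem_Icc.mp hk).1
      split_ifs with h
      · exact IH (n + 1 - k) (by omega) i (by omega)
      · rfl

lemma wcoef_eq_zero_of_gt (N : ℕ) : ∀ n i, N * i < n → wcoef N n i = 0 := by
  intro n
  induction n using Nat.strong_induction_on with
  | _ n IH =>
    intro i hi
    match n, i with
    | n + 1, 0 => exact wcoef_succ_zero N n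
    | n + 1, i + 1 =>
      rw [wcoef_succ]
      refine Finset.sum_eq_zero fun k hk => ?_
      have hk' := Finset.mem_Icc.mp hk
      have hNi : N * (i + 1) = N * i + N := by ring
      split_ifs with h
      · exact IH (n + 1 - k) (by omega) i (by omega)
      · rfl

lemma geom_aux (y : ℝ) (hy : 0 ≤ y) (n : ℕ) :
    ∀ K : ℕ, ∑ k ∈ Finset.Icc 1 K, (if k ≤ n + 1 then y * (1 + y) ^ (n + 1 - k) else 0)
      ≤ (1 + y) ^ (n + 1) - (1 + y) ^ (n + 1 - K) := by
  intro K
  induction K with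
  | zero => simp
  | succ K IH =>
    rw [Finset.sum_Icc_succ_top (by omega)]
    have h1 : (0:ℝ) < 1 + y := by linarith
    by_cases h : K + 1 ≤ n + 1
    · have e1 : n + 1 - K = (n - K) + 1 := by omega
      have e2 : n + 1 - (K + 1) = n - K := by omega
      rw [if_pos h, e2]
      have : (1 + y) ^ (n - K + 1) = (1 + y) * (1 + y) ^ (n - K) := by ring
      calc _ ≤ (1 + y) ^ (n + 1) - (1 + y) ^ (n + 1 - K) + y * (1 + y) ^ (n - K) :=
            add_le_add_left IH _
        _ ≤ _ := by rw [e1, this]; nlinarith [pow_nonneg (le_of_lt h1) (n - K)]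
    · have e1 : n + 1 - K = 0 := by omega
      have e2 : n + 1 - (K + 1) = 0 := by omega
      rw [if_neg h, e2]
      rw [e1] at IH
      linarith [IH]

lemma wcoef_sum_le (N : ℕ) (y : ℝ) (hy : 0 ≤ y) :
    ∀ n, ∑ i ∈ Finset.range (n + 1), (wcoef N n i : ℝ) * y ^ i ≤ (1 + y) ^ n := by
  intro n
  induction n using Nat.strong_induction_on with
  | _ n IH =>
    match n with
    | 0 => simp [wcoef_zero_zero]
    | n + 1 =>
      have h1 : (0:ℝ) < 1 + y := by linarith
      rw [Finset.sum_range_succ']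
      simp only [wcoef_succ_zero, Nat.cast_zero, zero_mul, add_zero, wcoef_succ,
        Nat.cast_sum, Nat.cast_ite, Nat.cast_zero]
      have key : ∀ k ∈ Finset.Icc 1 N,
          ∑ i ∈ Finset.range (n + 1),
              ((if k ≤ n + 1 then (wcoef N (n + 1 - k) i : ℝ) else 0) * y ^ (i + 1))
            ≤ (if k ≤ n + 1 then y * (1 + y) ^ (n + 1 - k) else 0) := by
        intro k hk
        have hk1 := (Finset.mem_Icc.mp hk).1
        by_cases h : k ≤ n + 1
        · rw [if_pos h]
          set j := n + 1 - k with hj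
          have hjn : j ≤ n := by omega
          have hsub : ∑ i ∈ Finset.range (n + 1), (wcoef N j i : ℝ) * y ^ i
              = ∑ i ∈ Finset.range (j + 1), (wcoef N j i : ℝ) * y ^ i := by
            refine (Finset.sum_subset (by intro i hi; simp_all; omega) ?_).symm
            intro i _ hi
            rw [wcoef_eq_zero_of_lt N j i (by simpa using hi)]
            simp
          have hIH : ∑ i ∈ Finset.range (n + 1), (wcoef N j i : ℝ) * y ^ i ≤ (1 + y) ^ j := by
            rw [hsub]; exact IH j (by omega)
          calc ∑ i ∈ Finset.range (n + 1), ((if k ≤ n + 1 then (wcoef N j i : ℝ) else 0) * y ^ (i + 1))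
              = y * ∑ i ∈ Finset.range (n + 1), (wcoef N j i : ℝ) * y ^ i := by
                rw [Finset.mul_sum]; refine Finset.sum_congr rfl fun i _ => ?_
                rw [if_pos h]; ring
            _ ≤ y * (1 + y) ^ j := by
                exact mul_le_mul_of_nonneg_left hIH hy
        · simp [h]
      calc ∑ i ∈ Finset.range (n + 1),
            (∑ k ∈ Finset.Icc 1 N, if k ≤ n + 1 then (wcoef N (n + 1 - k) i : ℝ) else 0) * y ^ (i + 1)
          = ∑ k ∈ Finset.Icc 1 N, ∑ i ∈ Finset.range (n + 1),
              ((if k ≤ n + 1 then (wcoef N (n + 1 - k) i : ℝ) else 0) * y ^ (i + 1)) := by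
            rw [Finset.sum_comm]
            refine Finset.sum_congr rfl fun i _ => ?_
            rw [Finset.sum_mul]
        _ ≤ ∑ k ∈ Finset.Icc 1 N, (if k ≤ n + 1 then y * (1 + y) ^ (n + 1 - k) else 0) :=
            Finset.sum_le_sum key
        _ ≤ (1 + y) ^ (n + 1) - (1 + y) ^ (n + 1 - N) := geom_aux y hy n N
        _ ≤ (1 + y) ^ (n + 1) := by
            have := pow_nonneg (le_of_lt h1) (n + 1 - N)
            linarith

lemma integral_sub_pow (x₀ x : ℝ) (p : ℕ) :
    ∫ z in x₀..x, (z - x₀) ^ p = (x - x₀) ^ (p + 1) / (p + 1) := by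
  rw [intervalIntegral.integral_comp_sub_right (fun u => u ^ p) x₀,
    integral_pow]
  simp

lemma abs_integral_abs_pow_le (x₀ x : ℝ) (p : ℕ) :
    |∫ z in x₀..x, |z - x₀| ^ p| ≤ |x - x₀| ^ (p + 1) / (p + 1) := by
  have hp : (0:ℝ) < p + 1 := by positivity
  rcases le_total x₀ x with h | h
  · have heq : ∫ z in x₀..x, |z - x₀| ^ p = ∫ z in x₀..x, (z - x₀) ^ p := by
      apply intervalIntegral.integral_congr
      intro z hz
      rw [Set.uIcc_of_le h] at hz
      simp only
      rw [abs_of_nonneg (by linarith [hz.1])]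
    rw [heq, integral_sub_pow, abs_div, abs_pow]
    rw [abs_of_nonneg hp.le]
  · have heq : ∫ z in x₀..x, |z - x₀| ^ p = ∫ z in x₀..x, (x₀ - z) ^ p := by
      apply intervalIntegral.integral_congr
      intro z hz
      rw [Set.uIcc_of_ge h] at hz
      simp only
      rw [abs_sub_comm, abs_of_nonneg (by linarith [hz.2])]
    rw [heq, intervalIntegral.integral_comp_sub_left (fun u => u ^ p) x₀,
      integral_pow]
    simp only [sub_self, zero_pow (Nat.succ_ne_zero p)]
    rw [abs_div, abs_of_nonneg hp.le, zero_sub, abs_neg, abs_pow, abs_sub_comm x x₀]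


noncomputable def Bfun (N : ℕ) (m x₀ : ℝ) (n : ℕ) (x : ℝ) : ℝ :=
  ∑ i ∈ Finset.range (n + 1),
    (wcoef N n i : ℝ) * ((m * (x - x₀)) ^ (2 * i) / (2 * i)!)

noncomputable def Gfun (N : ℕ) (m x₀ : ℝ) (n : ℕ) (x : ℝ) : ℝ :=
  ∑ i ∈ Finset.range (n + 1),
    (wcoef N n i : ℝ) * (m ^ (2 * i) * |x - x₀| ^ (2 * i + 1) / (2 * i + 1)!)

noncomputable def Dfun (N : ℕ) (m x₀ : ℝ) (n : ℕ) (x : ℝ) : ℝ :=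
  ∑ i ∈ Finset.range (n + 1),
    (wcoef N n i : ℝ) * (m ^ (2 * i) * (x - x₀) ^ (2 * i + 2) / (2 * i + 2)!)

lemma Bfun_nonneg (N : ℕ) {m : ℝ} (x₀ : ℝ) (hm : 0 ≤ m) (n : ℕ) (x : ℝ) :
    0 ≤ Bfun N m x₀ n x := by
  refine Finset.sum_nonneg fun i _ => ?_
  have : (0:ℝ) ≤ (m * (x - x₀)) ^ (2 * i) := (even_two_mul i).pow_nonneg _
  positivity

lemma Gfun_nonneg (N : ℕ) {m : ℝ} (x₀ : ℝ) (hm : 0 ≤ m) (n : ℕ) (x : ℝ) :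
    0 ≤ Gfun N m x₀ n x := by
  refine Finset.sum_nonneg fun i _ => ?_
  positivity

lemma Bfun_continuous (N : ℕ) (m x₀ : ℝ) (n : ℕ) : Continuous (Bfun N m x₀ n) := by
  refine continuous_finset_sum _ fun i _ => ?_
  fun_prop

lemma Gfun_continuous (N : ℕ) (m x₀ : ℝ) (n : ℕ) : Continuous (Gfun N m x₀ n) := by
  refine continuous_finset_sum _ fun i _ => ?_
  have : Continuous fun x : ℝ => |x - x₀| ^ (2 * i + 1) := by fun_prop
  fun_prop

lemma abs_integral_Bfun_le (N : ℕ) {m : ℝ} (x₀ : ℝ) (hm : 0 ≤ m) (n : ℕ) (x : ℝ) :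
    |∫ z in x₀..x, Bfun N m x₀ n z| ≤ Gfun N m x₀ n x := by
  unfold Bfun Gfun
  rw [intervalIntegral.integral_finset_sum (fun i _ => (by fun_prop :
    Continuous fun z => (wcoef N n i : ℝ) * ((m * (z - x₀)) ^ (2 * i) / (2 * i)!)).intervalIntegrable _ _)]
  refine (Finset.abs_sum_le_sum_abs _ _).trans (Finset.sum_le_sum fun i _ => ?_)
  have hrw : (fun z => (wcoef N n i : ℝ) * ((m * (z - x₀)) ^ (2 * i) / (2 * i)!))
      = fun z => ((wcoef N n i : ℝ) * m ^ (2 * i) / (2 * i)!) * (z - x₀) ^ (2 * i) := by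
    funext z; rw [mul_pow]; ring
  rw [hrw, intervalIntegral.integral_const_mul, integral_sub_pow]
  have hc : (0:ℝ) ≤ (wcoef N n i : ℝ) * m ^ (2 * i) / (2 * i)! := by positivity
  rw [abs_mul, abs_of_nonneg hc, abs_div, abs_pow]
  rw [abs_of_nonneg (show (0:ℝ) ≤ ((2 * i : ℕ) : ℝ) + 1 by positivity)]
  apply le_of_eq
  have hfac : ((2 * i + 1)! : ℝ) = (((2 * i : ℕ) : ℝ) + 1) * ((2 * i)! : ℝ) := by
    rw [Nat.factorial_succ]; push_cast; ring
  rw [hfac]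
  have h0 : ((2 * i)! : ℝ) ≠ 0 := by positivity
  have h1 : (((2 * i : ℕ) : ℝ) + 1) ≠ 0 := by positivity
  field_simp

lemma abs_integral_Gfun_le (N : ℕ) {m : ℝ} (x₀ : ℝ) (hm : 0 ≤ m) (n : ℕ) (x : ℝ) :
    |∫ z in x₀..x, Gfun N m x₀ n z| ≤ Dfun N m x₀ n x := by
  unfold Gfun Dfun
  rw [intervalIntegral.integral_finset_sum (fun i _ => (Continuous.intervalIntegrable (by
    have : Continuous fun z : ℝ => |z - x₀| ^ (2 * i + 1) := by fun_prop
    fun_prop) _ _))]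
  refine (Finset.abs_sum_le_sum_abs _ _).trans (Finset.sum_le_sum fun i _ => ?_)
  have hrw : (fun z => (wcoef N n i : ℝ) * (m ^ (2 * i) * |z - x₀| ^ (2 * i + 1) / (2 * i + 1)!))
      = fun z => ((wcoef N n i : ℝ) * m ^ (2 * i) / (2 * i + 1)!) * |z - x₀| ^ (2 * i + 1) := by
    funext z; ring
  rw [hrw, intervalIntegral.integral_const_mul, abs_mul]
  have h1 : |(wcoef N n i : ℝ) * m ^ (2 * i) / (2 * i + 1)!|
      = (wcoef N n i : ℝ) * m ^ (2 * i) / (2 * i + 1)! := by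
    rw [abs_of_nonneg]; positivity
  rw [h1]
  have h2 := abs_integral_abs_pow_le x₀ x (2 * i + 1)
  have h3 : (x - x₀) ^ (2 * i + 2) = |x - x₀| ^ (2 * i + 2) := by
    rw [← abs_pow, abs_of_nonneg]
    exact Even.pow_nonneg ⟨i + 1, by ring⟩ _
  have hfac : ((2 * i + 2)! : ℝ) = (((2 * i + 1 : ℕ) : ℝ) + 1) * ((2 * i + 1)! : ℝ) := by
    rw [show 2 * i + 2 = (2 * i + 1) + 1 from rfl, Nat.factorial_succ]; push_cast; ring
  calc (wcoef N n i : ℝ) * m ^ (2 * i) / (2 * i + 1)! * |∫ z in x₀..x, |z - x₀| ^ (2 * i + 1)|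
      ≤ (wcoef N n i : ℝ) * m ^ (2 * i) / (2 * i + 1)! * (|x - x₀| ^ (2 * i + 2) / ((2 * i + 1 : ℕ) + 1)) := by
        gcongr
    _ = (wcoef N n i : ℝ) * (m ^ (2 * i) * (x - x₀) ^ (2 * i + 2) / (2 * i + 2)!) := by
        rw [h3, hfac]
        have h0 : ((2 * i + 1)! : ℝ) ≠ 0 := by positivity
        have h1 : (((2 * i + 1 : ℕ) : ℝ) + 1) ≠ 0 := by positivity
        field_simp
lemma stepC (N : ℕ) {m : ℝ} (x₀ : ℝ) (hm : 0 ≤ m) (n : ℕ) (x : ℝ) :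
    (m * m) * ∑ k ∈ Finset.Icc 1 N, (if k ≤ n + 1 then Dfun N m x₀ (n + 1 - k) x else 0)
      ≤ Bfun N m x₀ (n + 1) x := by
  have hB : Bfun N m x₀ (n + 1) x
      = ∑ k ∈ Finset.Icc 1 N, ∑ i ∈ Finset.range (n + 1),
          ((if k ≤ n + 1 then (wcoef N (n + 1 - k) i : ℝ) else 0)
            * ((m * (x - x₀)) ^ (2 * (i + 1)) / (2 * (i + 1))!)) := by
    calc Bfun N m x₀ (n + 1) x
        = ∑ i ∈ Finset.range (n + 1),
            (wcoef N (n + 1) (i + 1) : ℝ) * ((m * (x - x₀)) ^ (2 * (i + 1)) / (2 * (i + 1))!) := by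
          rw [Bfun, Finset.sum_range_succ', wcoef_succ_zero]
          all_goals simp
      _ = ∑ i ∈ Finset.range (n + 1), ∑ k ∈ Finset.Icc 1 N,
            ((if k ≤ n + 1 then (wcoef N (n + 1 - k) i : ℝ) else 0)
              * ((m * (x - x₀)) ^ (2 * (i + 1)) / (2 * (i + 1))!)) := by
          refine Finset.sum_congr rfl fun i _ => ?_
          rw [wcoef_succ, Nat.cast_sum, Finset.sum_mul]
          refine Finset.sum_congr rfl fun k _ => ?_
          rw [Nat.cast_ite, Nat.cast_zero]
      _ = _ := Finset.sum_comm
  rw [hB, Finset.mul_sum]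
  refine Finset.sum_le_sum fun k hk => ?_
  have hk1 := (Finset.mem_Icc.mp hk).1
  by_cases h : k ≤ n + 1
  · rw [if_pos h]
    have hj : (n + 1 - k) + 1 ≤ n + 1 := by omega
    have hterm : ∀ i : ℕ, (m * m) * ((wcoef N (n + 1 - k) i : ℝ)
          * (m ^ (2 * i) * (x - x₀) ^ (2 * i + 2) / (2 * i + 2)!))
        = (wcoef N (n + 1 - k) i : ℝ) * ((m * (x - x₀)) ^ (2 * (i + 1)) / (2 * (i + 1))!) := by
      intro i
      rw [show 2 * (i + 1) = 2 * i + 2 from by ring, mul_pow]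
      ring
    calc (m * m) * Dfun N m x₀ (n + 1 - k) x
        = ∑ i ∈ Finset.range ((n + 1 - k) + 1),
            ((if k ≤ n + 1 then (wcoef N (n + 1 - k) i : ℝ) else 0)
              * ((m * (x - x₀)) ^ (2 * (i + 1)) / (2 * (i + 1))!)) := by
          rw [Dfun, Finset.mul_sum]
          refine Finset.sum_congr rfl fun i _ => ?_
          rw [if_pos h, ← hterm i]
      _ ≤ _ := by
          refine Finset.sum_le_sum_of_subset_of_nonneg
            (Finset.range_subset_range.mpr hj) (fun i _ _ => ?_)
          have h1 : (0:ℝ) ≤ (m * (x - x₀)) ^ (2 * (i + 1)) := (even_two_mul (i+1)).pow_nonneg _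
          have h2 : (0:ℝ) ≤ (if k ≤ n + 1 then (wcoef N (n + 1 - k) i : ℝ) else 0) := by
            by_cases hc : k ≤ n + 1 <;> simp [hc]
          positivity
  · rw [if_neg h, mul_zero]
    refine Finset.sum_nonneg fun i _ => ?_
    rw [if_neg h, zero_mul]

theorem keyXt (a b x₀ : ℝ) (hx₀ : x₀ ∈ Set.Icc a b)
    (N : ℕ) (p u₀ : ℝ → ℂ) (r : ℕ → ℝ → ℂ) (m : ℝ) (hm : 0 ≤ m)
    (Xt : ℤ → ℝ → ℂ)
    (hneg : ∀ n : ℤ, n < 0 → ∀ x, Xt n x = 0)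
    (hzero : ∀ x, Xt 0 x = 1)
    (hodd : ∀ n : ℤ, 0 < n → Odd n → ∀ x,
      Xt n x = ∫ y in x₀..x, u₀ y ^ 2 * ∑ k ∈ Finset.Icc 1 N, Xt (n - 2 * (k : ℤ) + 1) y * r k y)
    (heven : ∀ n : ℤ, 0 < n → Even n → ∀ x,
      Xt n x = ∫ y in x₀..x, Xt (n - 1) y / (u₀ y ^ 2 * p y))
    (hbound1 : ∀ k ∈ Finset.Icc 1 N, ∀ x ∈ Set.Icc a b, ‖u₀ x ^ 2 * r k x‖ ≤ m)
    (hbound2 : ∀ x ∈ Set.Icc a b, ‖1 / (u₀ x ^ 2 * p x)‖ ≤ m) :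
    ∀ n : ℕ, ∀ x ∈ Set.Icc a b, ‖Xt (2 * n) x‖ ≤ Bfun N m x₀ n x := by
  intro n
  induction n using Nat.strong_induction_on with
  | _ n IH =>
    match n with
    | 0 =>
      intro x hx
      rw [show (2 * ((0:ℕ):ℤ)) = 0 by simp, hzero]
      simp [Bfun, wcoef_zero_zero]
    | n + 1 =>
      intro x hx
      -- notation
      set S1 : ℝ → ℝ := fun z =>
        ∑ k ∈ Finset.Icc 1 N, (if k ≤ n + 1 then Bfun N m x₀ (n + 1 - k) z else 0) with hS1
      set S2 : ℝ → ℝ := fun z =>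
        ∑ k ∈ Finset.Icc 1 N, (if k ≤ n + 1 then Gfun N m x₀ (n + 1 - k) z else 0) with hS2
      have hS1c : Continuous S1 := by
        refine continuous_finset_sum _ fun k _ => ?_
        split_ifs
        · exact Bfun_continuous N m x₀ _
        · exact continuous_const
      have hS2c : Continuous S2 := by
        refine continuous_finset_sum _ fun k _ => ?_
        split_ifs
        · exact Gfun_continuous N m x₀ _
        · exact continuous_const
      have hS2nn : ∀ z, 0 ≤ S2 z := by
        intro z
        refine Finset.sum_nonneg fun k _ => ?_
        split_ifs
        · exact Gfun_nonneg N x₀ hm _ z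
        · exact le_refl 0
      -- Step A : odd level bound
      have stepA : ∀ y ∈ Set.Icc a b, ‖Xt (2 * ((n:ℤ) + 1) - 1) y‖ ≤ m * S2 y := by
        intro y hy
        rw [hodd (2 * ((n:ℤ) + 1) - 1) (by omega) ⟨(n:ℤ), by ring⟩ y]
        have hsub : Set.uIoc x₀ y ⊆ Set.Icc a b :=
          Set.uIoc_subset_uIcc.trans (Set.uIcc_subset_Icc hx₀ hy)
        have hae : ∀ᵐ t ∂(volume.restrict (Set.uIoc x₀ y)),
            ‖u₀ t ^ 2 * ∑ k ∈ Finset.Icc 1 N,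
                Xt (2 * ((n:ℤ) + 1) - 1 - 2 * (k:ℤ) + 1) t * r k t‖ ≤ m * S1 t := by
          refine ae_restrict_of_forall_mem measurableSet_uIoc fun z hz => ?_
          have hzI : z ∈ Set.Icc a b := hsub hz
          have hrw : u₀ z ^ 2 * ∑ k ∈ Finset.Icc 1 N,
                Xt (2 * ((n:ℤ) + 1) - 1 - 2 * (k:ℤ) + 1) z * r k z
              = ∑ k ∈ Finset.Icc 1 N,
                (u₀ z ^ 2 * r k z) * Xt (2 * ((n:ℤ) + 1) - 1 - 2 * (k:ℤ) + 1) z := by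
            rw [Finset.mul_sum]
            exact Finset.sum_congr rfl fun k _ => by ring
          rw [hrw]
          refine (norm_sum_le _ _).trans ?_
          rw [hS1, Finset.mul_sum]
          refine Finset.sum_le_sum fun k hk => ?_
          have hk1 := (Finset.mem_Icc.mp hk).1
          rw [norm_mul]
          by_cases h : k ≤ n + 1
          · have hidx : (2 * ((n:ℤ) + 1) - 1 - 2 * (k:ℤ) + 1) = 2 * ((n + 1 - k : ℕ) : ℤ) := by
              rw [Nat.cast_sub h]
              push_cast
              ring
            rw [hidx, if_pos h]
            exact mul_le_mul (hbound1 k hk z hzI) (IH (n + 1 - k) (by omega) z hzI)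
              (norm_nonneg _) hm
          · have hidx : (2 * ((n:ℤ) + 1) - 1 - 2 * (k:ℤ) + 1) < 0 := by omega
            rw [hneg _ hidx, if_neg h]
            simp
        calc ‖∫ t in x₀..y, u₀ t ^ 2 * ∑ k ∈ Finset.Icc 1 N,
                Xt (2 * ((n:ℤ) + 1) - 1 - 2 * (k:ℤ) + 1) t * r k t‖
            ≤ |∫ t in x₀..y, m * S1 t| :=
              intervalIntegral.norm_integral_le_abs_of_norm_le hae
                ((continuous_const.mul hS1c).intervalIntegrable _ _)
          _ ≤ m * S2 y := by
              rw [intervalIntegral.integral_const_mul, abs_mul, abs_of_nonneg hm]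
              refine mul_le_mul_of_nonneg_left ?_ hm
              rw [hS1, hS2]
              rw [intervalIntegral.integral_finset_sum (fun k _ => ?_)]
              · refine (Finset.abs_sum_le_sum_abs _ _).trans (Finset.sum_le_sum fun k _ => ?_)
                by_cases h : k ≤ n + 1
                · simp only [if_pos h]
                  exact abs_integral_Bfun_le N x₀ hm _ y
                · simp only [if_neg h]
                  simp
              · split_ifs
                · exact (Bfun_continuous N m x₀ _).intervalIntegrable _ _
                · exact intervalIntegrable_const
      -- Step B : even level
      have hcast : ((2 * ((n + 1 : ℕ)) : ℤ)) = 2 * ((n:ℤ) + 1) := by push_cast; ring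
      rw [show (2 * (((n:ℕ) + 1 : ℕ) : ℤ)) = 2 * ((n:ℤ) + 1) by push_cast; ring]
      rw [heven (2 * ((n:ℤ) + 1)) (by omega) ⟨(n:ℤ) + 1, by ring⟩ x]
      have hsub : Set.uIoc x₀ x ⊆ Set.Icc a b :=
        Set.uIoc_subset_uIcc.trans (Set.uIcc_subset_Icc hx₀ hx)
      have hae2 : ∀ᵐ t ∂(volume.restrict (Set.uIoc x₀ x)),
          ‖Xt (2 * ((n:ℤ) + 1) - 1) t / (u₀ t ^ 2 * p t)‖ ≤ (m * m) * S2 t := by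
        refine ae_restrict_of_forall_mem measurableSet_uIoc fun z hz => ?_
        have hzI : z ∈ Set.Icc a b := hsub hz
        rw [div_eq_mul_one_div, norm_mul]
        calc ‖Xt (2 * ((n:ℤ) + 1) - 1) z‖ * ‖1 / (u₀ z ^ 2 * p z)‖
            ≤ (m * S2 z) * m :=
              mul_le_mul (stepA z hzI) (hbound2 z hzI) (norm_nonneg _)
                (mul_nonneg hm (hS2nn z))
          _ = (m * m) * S2 z := by ring
      calc ‖∫ t in x₀..x, Xt (2 * ((n:ℤ) + 1) - 1) t / (u₀ t ^ 2 * p t)‖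
          ≤ |∫ t in x₀..x, (m * m) * S2 t| :=
            intervalIntegral.norm_integral_le_abs_of_norm_le hae2
              ((continuous_const.mul hS2c).intervalIntegrable _ _)
        _ ≤ (m * m) * ∑ k ∈ Finset.Icc 1 N,
              (if k ≤ n + 1 then Dfun N m x₀ (n + 1 - k) x else 0) := by
            rw [intervalIntegral.integral_const_mul, abs_mul,
              abs_of_nonneg (mul_nonneg hm hm)]
            refine mul_le_mul_of_nonneg_left ?_ (mul_nonneg hm hm)
            rw [hS2]
            rw [intervalIntegral.integral_finset_sum (fun k _ => ?_)]
            · refine (Finset.abs_sum_le_sum_abs _ _).trans (Finset.sum_le_sum fun k _ => ?_)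
              by_cases h : k ≤ n + 1
              · simp only [if_pos h]
                exact abs_integral_Gfun_le N x₀ hm _ x
              · simp only [if_neg h]
                simp
            · split_ifs
              · exact (Gfun_continuous N m x₀ _).intervalIntegrable _ _
              · exact intervalIntegrable_const
        _ ≤ Bfun N m x₀ (n + 1) x := stepC N x₀ hm n x
lemma Bfun_le (N : ℕ) (hN : 1 ≤ N) {m : ℝ} (hm : 0 ≤ m) {a b x₀ x : ℝ}
    (hx₀ : x₀ ∈ Set.Icc a b) (hx : x ∈ Set.Icc a b) (n : ℕ) :
    Bfun N m x₀ n x ≤ ((m * (b - a)) ^ 2 + 1) ^ n / (2 * (n / N))! := by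
  obtain ⟨hx1, hx2⟩ := hx
  obtain ⟨h01, h02⟩ := hx₀
  have hsq : (m * (x - x₀)) ^ 2 ≤ (m * (b - a)) ^ 2 := by
    rw [mul_pow, mul_pow]
    have h2 : (x - x₀) ^ 2 ≤ (b - a) ^ 2 := sq_le_sq' (by linarith) (by linarith)
    exact mul_le_mul_of_nonneg_left h2 (by positivity)
  rw [Bfun]
  calc ∑ i ∈ Finset.range (n + 1), (wcoef N n i : ℝ) * ((m * (x - x₀)) ^ (2 * i) / (2 * i)!)
      ≤ ∑ i ∈ Finset.range (n + 1),
          (wcoef N n i : ℝ) * (((m * (b - a)) ^ 2) ^ i / (2 * (n / N))!) := by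
        refine Finset.sum_le_sum fun i _ => ?_
        by_cases hw : wcoef N n i = 0
        · simp [hw]
        · have hNi : n ≤ N * i := by
            by_contra hcon
            exact hw (wcoef_eq_zero_of_gt N n i (by omega))
          have hdiv : n / N ≤ i := by
            calc n / N ≤ (N * i) / N := Nat.div_le_div_right hNi
              _ = i := Nat.mul_div_cancel_left i (by omega)
          have hfac : ((2 * (n / N))! : ℝ) ≤ ((2 * i)! : ℝ) := by
            exact_mod_cast Nat.factorial_le (by omega)
          have hnum : (m * (x - x₀)) ^ (2 * i) ≤ ((m * (b - a)) ^ 2) ^ i := by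
            rw [pow_mul]
            exact pow_le_pow_left₀ (sq_nonneg _) hsq i
          refine mul_le_mul_of_nonneg_left ?_ (Nat.cast_nonneg _)
          exact div_le_div₀ (by positivity) hnum (by positivity) hfac
    _ = (∑ i ∈ Finset.range (n + 1), (wcoef N n i : ℝ) * ((m * (b - a)) ^ 2) ^ i)
          / (2 * (n / N))! := by
        rw [Finset.sum_div]
        exact Finset.sum_congr rfl fun i _ => by ring
    _ ≤ (1 + (m * (b - a)) ^ 2) ^ n / (2 * (n / N))! := by
        gcongr
        exact wcoef_sum_le N _ (by positivity) n
    _ = ((m * (b - a)) ^ 2 + 1) ^ n / (2 * (n / N))! := by rw [add_comm]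

set_option maxHeartbeats 1000000 in
theorem stmt5 (a b x₀ : ℝ) (hab : a ≤ b) (hx₀ : x₀ ∈ Set.Icc a b)
    (N : ℕ) (hN : 1 ≤ N) (p u₀ : ℝ → ℂ) (r : ℕ → ℝ → ℂ) (m : ℝ) (hm : 0 ≤ m)
    (Xt : ℤ → ℝ → ℂ)
    (hneg : ∀ n : ℤ, n < 0 → ∀ x, Xt n x = 0)
    (hzero : ∀ x, Xt 0 x = 1)
    (hodd : ∀ n : ℤ, 0 < n → Odd n → ∀ x,
      Xt n x = ∫ y in x₀..x, u₀ y ^ 2 * ∑ k ∈ Finset.Icc 1 N, Xt (n - 2 * (k : ℤ) + 1) y * r k y)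
    (heven : ∀ n : ℤ, 0 < n → Even n → ∀ x,
      Xt n x = ∫ y in x₀..x, Xt (n - 1) y / (u₀ y ^ 2 * p y))
    (hcont1 : ∀ k ∈ Finset.Icc 1 N, ContinuousOn (fun x => u₀ x ^ 2 * r k x) (Set.Icc a b))
    (hcont2 : ContinuousOn (fun x => 1 / (u₀ x ^ 2 * p x)) (Set.Icc a b))
    (hbound1 : ∀ k ∈ Finset.Icc 1 N, ∀ x ∈ Set.Icc a b, ‖u₀ x ^ 2 * r k x‖ ≤ m)
    (hbound2 : ∀ x ∈ Set.Icc a b, ‖1 / (u₀ x ^ 2 * p x)‖ ≤ m)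
    (lam : ℂ) :
    (∀ x ∈ Set.Icc a b,
      Summable (fun n : ℕ => ‖lam‖ ^ n * ‖Xt (2 * n) x‖) ∧
      (∑' n : ℕ, ‖lam‖ ^ n * ‖Xt (2 * n) x‖) ≤
        (∑ k ∈ Finset.range N, (‖lam‖ * ((m * (b - a)) ^ 2 + 1)) ^ k) *
          Real.cosh ((‖lam‖ * ((m * (b - a)) ^ 2 + 1)) ^ ((N : ℝ) / 2))) ∧
    TendstoUniformlyOn (fun (M : ℕ) (x : ℝ) => ∑ n ∈ Finset.range M, lam ^ n * Xt (2 * n) x)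
      (fun x => ∑' n : ℕ, lam ^ n * Xt (2 * n) x) atTop (Set.Icc a b) := by
  haveI : NeZero N := ⟨by omega⟩
  set Mv : ℝ := ‖lam‖ * ((m * (b - a)) ^ 2 + 1) with hMvdef
  have hMv0 : 0 ≤ Mv := by positivity
  set u : ℕ → ℝ := fun n => Mv ^ n / (2 * (n / N))! with hudef
  have hkey := keyXt a b x₀ hx₀ N p u₀ r m hm Xt hneg hzero hodd heven hbound1 hbound2
  -- pointwise bound
  have hfb : ∀ (n : ℕ), ∀ x ∈ Set.Icc a b, ‖lam‖ ^ n * ‖Xt (2 * n) x‖ ≤ u n := by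
    intro n x hx
    have h1 : ‖Xt (2 * (n:ℤ)) x‖ ≤ ((m * (b - a)) ^ 2 + 1) ^ n / (2 * (n / N))! :=
      (hkey n x hx).trans (Bfun_le N hN hm hx₀ hx n)
    calc ‖lam‖ ^ n * ‖Xt (2 * (n:ℤ)) x‖
        ≤ ‖lam‖ ^ n * (((m * (b - a)) ^ 2 + 1) ^ n / (2 * (n / N))!) :=
          mul_le_mul_of_nonneg_left h1 (by positivity)
      _ = u n := by
          simp only [hudef, hMvdef]
          rw [mul_pow ‖lam‖ ((m * (b - a)) ^ 2 + 1) n, mul_div_assoc]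
  -- summability of the majorant
  have hq : Summable (fun q : ℕ => (Mv ^ N) ^ q / (2 * q)!) := by
    refine Summable.of_nonneg_of_le (fun q => by positivity) (fun q => ?_)
      (Real.summable_pow_div_factorial (Mv ^ N))
    have hfl : (q ! : ℝ) ≤ ((2 * q)! : ℝ) := by
      exact_mod_cast Nat.factorial_le (by omega)
    exact div_le_div₀ (by positivity) (le_refl _) (by positivity) hfl
  have hFin : Summable (fun s : Fin N => Mv ^ (s : ℕ)) := Summable.of_finite
  have hgF : Summable (fun p : ℕ × Fin N => ((Mv ^ N) ^ p.1 / (2 * p.1)!) * Mv ^ ((p.2 : Fin N) : ℕ)) :=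
    hq.mul_of_nonneg hFin (fun q => by positivity) (fun s => by positivity)
  have hcomp : ∀ p : ℕ × Fin N,
      u ((Nat.divModEquiv N).symm p) = ((Mv ^ N) ^ p.1 / (2 * p.1)!) * Mv ^ ((p.2 : Fin N) : ℕ) := by
    rintro ⟨q, s⟩
    have hsymm : (Nat.divModEquiv N).symm (q, s) = q * N + (s : ℕ) := rfl
    rw [hsymm]
    simp only [hudef]
    have hdiv : (q * N + (s : ℕ)) / N = q := by
      rw [mul_comm q N, add_comm, Nat.add_mul_div_left _ _ (show 0 < N by omega),
        Nat.div_eq_of_lt s.isLt, zero_add]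
    rw [hdiv, pow_add, mul_comm q N, pow_mul]
    ring
  have hu : Summable u := by
    have h2 : Summable (u ∘ (Nat.divModEquiv N).symm) := by
      have he : u ∘ (Nat.divModEquiv N).symm
          = fun p : ℕ × Fin N => ((Mv ^ N) ^ p.1 / (2 * p.1)!) * Mv ^ ((p.2 : Fin N) : ℕ) :=
        funext fun p => hcomp p
      rw [he]
      exact hgF
    exact (Equiv.summable_iff _).mp h2
  -- power identity for cosh
  have hy : ∀ q : ℕ, (Mv ^ ((N : ℝ) / 2)) ^ (2 * q) = (Mv ^ N) ^ q := by
    intro q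
    calc (Mv ^ ((N : ℝ) / 2)) ^ (2 * q)
        = (Mv ^ ((N : ℝ) / 2)) ^ (((2 * q : ℕ)) : ℝ) := (Real.rpow_natCast _ _).symm
      _ = Mv ^ ((N : ℝ) / 2 * (((2 * q : ℕ)) : ℝ)) := by
          rw [← Real.rpow_mul hMv0]
      _ = Mv ^ (((N * q : ℕ)) : ℝ) := by
          congr 1
          push_cast
          ring
      _ = Mv ^ (N * q) := Real.rpow_natCast _ _
      _ = (Mv ^ N) ^ q := pow_mul _ _ _
  -- tsum of the majorant
  have htsum : ∑' n, u n
      = (∑ k ∈ Finset.range N, Mv ^ k) * Real.cosh (Mv ^ ((N : ℝ) / 2)) := by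
    have h1 : ∑' n, u n = ∑' p : ℕ × Fin N, ((Mv ^ N) ^ p.1 / (2 * p.1)!) * Mv ^ ((p.2 : Fin N) : ℕ) := by
      rw [← (Nat.divModEquiv N).symm.tsum_eq u]
      exact tsum_congr hcomp
    have hnorm1 : Summable (fun q : ℕ => ‖(Mv ^ N) ^ q / (2 * q)!‖) := by
      refine hq.congr fun q => ?_
      rw [Real.norm_eq_abs, abs_of_nonneg (by positivity)]
    have hnorm2 : Summable (fun s : Fin N => ‖Mv ^ (s : ℕ)‖) := Summable.of_finite
    have h2 : (∑' q : ℕ, (Mv ^ N) ^ q / (2 * q)!) * (∑' s : Fin N, Mv ^ (s : ℕ))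
        = ∑' p : ℕ × Fin N, ((Mv ^ N) ^ p.1 / (2 * p.1)!) * Mv ^ ((p.2 : Fin N) : ℕ) :=
      tsum_mul_tsum_of_summable_norm hnorm1 hnorm2
    have h3 : (∑' q : ℕ, (Mv ^ N) ^ q / (2 * q)!) = Real.cosh (Mv ^ ((N : ℝ) / 2)) := by
      rw [Real.cosh_eq_tsum]
      exact tsum_congr fun q => by rw [hy q]
    have h4 : (∑' s : Fin N, Mv ^ (s : ℕ)) = ∑ k ∈ Finset.range N, Mv ^ k := by
      rw [tsum_fintype]
      exact Fin.sum_univ_eq_sum_range (fun k => Mv ^ k) N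
    rw [h1, ← h2, h3, h4]
    ring
  constructor
  · intro x hx
    have hsx : Summable (fun n : ℕ => ‖lam‖ ^ n * ‖Xt (2 * n) x‖) :=
      Summable.of_nonneg_of_le (fun n => by positivity) (fun n => hfb n x hx) hu
    refine ⟨hsx, ?_⟩
    calc ∑' n : ℕ, ‖lam‖ ^ n * ‖Xt (2 * n) x‖ ≤ ∑' n, u n :=
          Summable.tsum_le_tsum (fun n => hfb n x hx) hsx hu
      _ = _ := htsum
  · refine tendstoUniformlyOn_tsum_nat hu (fun n x hx => ?_)
    rw [norm_mul, norm_pow]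
    exact hfb n x hx
end
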